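/- Let p₀ ≥ 0 and let f : (0,∞) → ℝ be continuous with f(ℓ) > 0 for all ℓ > 0 and ∫₀^∞ f(ℓ)dℓ ≤ 1; set F(x) := p₀ + ∫₀ˣ f(ℓ)dℓ. Let U : ℝ → ℝ be a continuous, strictly increasing bijection, let c ∈ ℝ, and let α, β ∈ ℝ. Define Q̃ : [0,∞) → ℝ by Q̃(b) := ∫₀ᵇ U(c + ℓ) f(ℓ)dℓ + F(b)·α + (1 − F(b))·β. Then Q̃ attains its minimum over [0,∞) at the unique point b̃* = max(0, U⁻¹(β − α) − c); that is, Q̃(b̃*) ≤ Q̃(b) for all b ≥ 0, with equality only when b = b̃*. -/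

import Mathlib

open MeasureTheory Set

/-- The one-step objective of a risk-averse insured: expected utility of hidden
losses plus probability-weighted continuation values `α` (bonus, probability
`F(b) = p₀ + ∫₀ᵇ f`) and `β` (malus). -/
noncomputable def QobjU (p₀ : ℝ) (f U : ℝ → ℝ) (c α β b : ℝ) : ℝ :=
  (∫ ℓ in (0:ℝ)..b, U (c + ℓ) * f ℓ) + (p₀ + ∫ ℓ in (0:ℝ)..b, f ℓ) * α
    + (1 - (p₀ + ∫ ℓ in (0:ℝ)..b, f ℓ)) * β

/-- `Q̃` attains its minimum over `[0,∞)` at the unique point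
`b̃* = max 0 (U⁻¹(β − α) − c)`. -/
theorem stmt_3 (p₀ : ℝ) (hp₀ : 0 ≤ p₀) (f : ℝ → ℝ)
    (hfc : ContinuousOn f (Set.Ioi 0)) (hfpos : ∀ ℓ : ℝ, 0 < ℓ → 0 < f ℓ)
    (hfint : IntegrableOn f (Set.Ioi 0))
    (hle : ∫ ℓ in Set.Ioi (0:ℝ), f ℓ ≤ 1)
    (U : ℝ → ℝ) (hUc : Continuous U) (hUm : StrictMono U)
    (hUb : Function.Bijective U)
    (Uinv : ℝ → ℝ) (hUinvL : Function.LeftInverse Uinv U)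
    (hUinvR : Function.RightInverse Uinv U)
    (c α β : ℝ) :
    (∀ b : ℝ, 0 ≤ b →
      QobjU p₀ f U c α β (max 0 (Uinv (β - α) - c)) ≤ QobjU p₀ f U c α β b) ∧
    (∀ b : ℝ, 0 ≤ b →
      QobjU p₀ f U c α β b = QobjU p₀ f U c α β (max 0 (Uinv (β - α) - c)) →
      b = max 0 (Uinv (β - α) - c)) := by
  set r : ℝ := β - α with hr
  set bs : ℝ := max 0 (Uinv (β - α) - c) with hbs
  have hbs0 : (0:ℝ) ≤ bs := le_max_left _ _
  have hbsr : Uinv r - c ≤ bs := le_max_right _ _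
  -- interval integrability of f on nonneg intervals
  have hfInt : ∀ a b : ℝ, 0 ≤ a → 0 ≤ b → IntervalIntegrable f volume a b := by
    intro a b ha hb
    rw [intervalIntegrable_iff]
    exact hfint.mono_set (fun x hx => (le_min ha hb).trans_lt hx.1)
  -- interval integrability of U(c+ℓ)*f ℓ on nonneg intervals
  have hUfInt : ∀ a b : ℝ, 0 ≤ a → 0 ≤ b →
      IntervalIntegrable (fun ℓ => U (c + ℓ) * f ℓ) volume a b := by
    intro a b ha hb
    rw [intervalIntegrable_iff]
    have hfi : IntegrableOn f (Set.uIoc a b) :=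
      hfint.mono_set (fun x hx => (le_min ha hb).trans_lt hx.1)
    refine Integrable.bdd_mul (c := max ‖U c‖ ‖U (c + max a b)‖) hfi
      ((hUc.comp (continuous_const.add continuous_id)).aestronglyMeasurable) ?_
    refine (ae_restrict_iff' measurableSet_uIoc).mpr (ae_of_all _ fun x hx => ?_)
    rw [Set.mem_uIoc] at hx
    have h1 : 0 < x := by rcases hx with ⟨h, _⟩ | ⟨h, _⟩ <;> linarith [ha, hb]
    have h2 : x ≤ max a b := by
      rcases hx with ⟨_, h⟩ | ⟨_, h⟩
      · exact h.trans (le_max_right a b)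
      · exact h.trans (le_max_left a b)
    have := hUm.monotone (show c ≤ c + x by linarith)
    have := hUm.monotone (show c + x ≤ c + max a b by linarith)
    exact abs_le_max_abs_abs ‹U c ≤ U (c + x)› ‹U (c + x) ≤ U (c + max a b)›
  have hgInt : ∀ a b : ℝ, 0 ≤ a → 0 ≤ b →
      IntervalIntegrable (fun ℓ => U (c + ℓ) * f ℓ - r * f ℓ) volume a b :=
    fun a b ha hb => (hUfInt a b ha hb).sub ((hfInt a b ha hb).const_mul r)
  -- rewriting of the objective
  have hQ : ∀ b : ℝ, 0 ≤ b → QobjU p₀ f U c α β b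
      = (∫ ℓ in (0:ℝ)..b, (U (c + ℓ) * f ℓ - r * f ℓ)) + (p₀ * α + (1 - p₀) * β) := by
    intro b hb
    rw [QobjU, intervalIntegral.integral_sub (hUfInt 0 b le_rfl hb)
      ((hfInt 0 b le_rfl hb).const_mul r), intervalIntegral.integral_const_mul]
    ring
  -- key strict inequality
  have key : ∀ b : ℝ, 0 ≤ b → b ≠ bs →
      QobjU p₀ f U c α β bs < QobjU p₀ f U c α β b := by
    intro b hb hne
    rw [hQ b hb, hQ bs hbs0]
    have hadj : (∫ ℓ in (0:ℝ)..bs, (U (c + ℓ) * f ℓ - r * f ℓ))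
        + (∫ ℓ in bs..b, (U (c + ℓ) * f ℓ - r * f ℓ))
        = ∫ ℓ in (0:ℝ)..b, (U (c + ℓ) * f ℓ - r * f ℓ) :=
      intervalIntegral.integral_add_adjacent_intervals
        (hgInt 0 bs le_rfl hbs0) (hgInt bs b hbs0 hb)
    have hpos : 0 < ∫ ℓ in bs..b, (U (c + ℓ) * f ℓ - r * f ℓ) := by
      rcases lt_or_gt_of_ne hne with hlt | hgt
      · -- b < bs
        have hbspos : 0 < bs := hb.trans_lt hlt
        have hbseq : bs = Uinv r - c := by
          rcases (lt_max_iff.mp hbspos) with h | h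
          · exact absurd h (lt_irrefl 0)
          · exact max_eq_right h.le
        have hneg : 0 < ∫ ℓ in b..bs, (-(U (c + ℓ) * f ℓ - r * f ℓ)) := by
          refine intervalIntegral.intervalIntegral_pos_of_pos_on ((hgInt b bs hb hbs0).neg) ?_ hlt
          intro x hx
          have hx0 : 0 < x := hb.trans_lt hx.1
          have hfx := hfpos x hx0
          have : U (c + x) < r := by
            have hxb : x < bs := hx.2
            rw [hbseq] at hxb
            have : c + x < Uinv r := by linarith
            have := hUm this
            rwa [hUinvR r] at this
          have : U (c + x) * f x - r * f x < 0 := by nlinarith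
          linarith
        rw [intervalIntegral.integral_symm] at hneg
        rw [intervalIntegral.integral_neg] at hneg
        linarith
      · -- bs < b
        refine intervalIntegral.intervalIntegral_pos_of_pos_on (hgInt bs b hbs0 hb) ?_ hgt
        intro x hx
        have hx0 : 0 < x := hbs0.trans_lt hx.1
        have hfx := hfpos x hx0
        have : r < U (c + x) := by
          have h1 : Uinv r < c + x := by linarith [hx.1, hbsr]
          have := hUm h1
          rwa [hUinvR r] at this
        nlinarith
    linarith [hadj]
  constructor
  · intro b hb
    by_cases h : b = bs
    · rw [h]
    · exact (key b hb h).le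
  · intro b hb heq
    by_contra h
    exact (key b hb h).ne' heq
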